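/- arXiv:math/9907103 — 2 statements merged into one kernel-verified Lean document; each statement's English description precedes it below -/
import Mathlib

section
/- Let L be a complex Hilbert space and G a set of unitary operators on L that is closed under taking inverses (e.g., a group of unitary operators). Suppose that the commutant of G is abelian, i.e., any two bounded operators on L that each commute with every element of G commute with each other. Let (M, D) be a symmetric operator with dense domain D ⊆ L such that D is stable under every u ∈ G and M(u·φ) = u·(M(φ)) for all φ ∈ D, u ∈ G. Then M is essentially self-adjoint, i.e., the closure of M is self-adjoint (equivalently, the adjoint M* of M is self-adjoint). -/
open scoped InnerProductSpace ComplexConjugate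
set_option linter.unusedSectionVars false
set_option maxHeartbeats 1000000

namespace EssSAProof
variable {L : Type*} [NormedAddCommGroup L] [InnerProductSpace ℂ L] [CompleteSpace L]

noncomputable def Tp (T : L →ₗ.[ℂ] L) : T.domain →ₗ[ℂ] L :=
  T.toFun + Complex.I • T.domain.subtype

noncomputable def Tm (T : L →ₗ.[ℂ] L) : T.domain →ₗ[ℂ] L :=
  T.toFun - Complex.I • T.domain.subtype

lemma Tp_apply (T : L →ₗ.[ℂ] L) (φ : T.domain) : Tp T φ = T φ + Complex.I • (φ : L) := rfl

lemma Tm_apply (T : L →ₗ.[ℂ] L) (φ : T.domain) : Tm T φ = T φ - Complex.I • (φ : L) := rfl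

section Symm
variable {T : L →ₗ.[ℂ] L}
  (hsymm : ∀ φ ψ : T.domain, ⟪T φ, (ψ : L)⟫_ℂ = ⟪(φ : L), T ψ⟫_ℂ)
include hsymm

lemma inner_self_Tp (φ : T.domain) :
    ⟪Tp T φ, Tp T φ⟫_ℂ = ⟪T φ, T φ⟫_ℂ + ⟪(φ : L), (φ : L)⟫_ℂ := by
  have h := hsymm φ φ
  simp only [Tp_apply, inner_add_left, inner_add_right, inner_smul_left, inner_smul_right,
    Complex.conj_I]
  rw [h]; ring_nf; rw [Complex.I_sq]; ring

lemma inner_self_Tm (φ : T.domain) :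
    ⟪Tm T φ, Tm T φ⟫_ℂ = ⟪T φ, T φ⟫_ℂ + ⟪(φ : L), (φ : L)⟫_ℂ := by
  have h := hsymm φ φ
  simp only [Tm_apply, inner_sub_left, inner_sub_right, inner_smul_left, inner_smul_right,
    Complex.conj_I]
  rw [h]; ring_nf; rw [Complex.I_sq]; ring

lemma norm_sq_Tp (φ : T.domain) : ‖Tp T φ‖ ^ 2 = ‖T φ‖ ^ 2 + ‖(φ : L)‖ ^ 2 := by
  have h := inner_self_Tp hsymm φ
  rw [inner_self_eq_norm_sq_to_K, inner_self_eq_norm_sq_to_K, inner_self_eq_norm_sq_to_K] at h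
  exact_mod_cast h

lemma norm_sq_Tm (φ : T.domain) : ‖Tm T φ‖ ^ 2 = ‖T φ‖ ^ 2 + ‖(φ : L)‖ ^ 2 := by
  have h := inner_self_Tm hsymm φ
  rw [inner_self_eq_norm_sq_to_K, inner_self_eq_norm_sq_to_K, inner_self_eq_norm_sq_to_K] at h
  exact_mod_cast h

lemma norm_Tp_eq_norm_Tm (φ : T.domain) : ‖Tp T φ‖ = ‖Tm T φ‖ := by
  have h1 := norm_sq_Tp hsymm φ
  have h2 := norm_sq_Tm hsymm φ
  nlinarith [norm_nonneg (Tp T φ), norm_nonneg (Tm T φ)]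

lemma norm_le_norm_Tp (φ : T.domain) : ‖(φ : L)‖ ≤ ‖Tp T φ‖ := by
  have h1 := norm_sq_Tp hsymm φ
  nlinarith [norm_nonneg (Tp T φ), norm_nonneg (T φ), norm_nonneg ((φ : L))]

lemma Tp_injective : Function.Injective (Tp T) := by
  intro a b hab
  have h0 : Tp T (a - b) = 0 := by rw [map_sub, hab, sub_self]
  have h1 := norm_le_norm_Tp hsymm (a - b)
  rw [h0, norm_zero] at h1
  have h2 : ((a - b : T.domain) : L) = 0 := norm_le_zero_iff.mp h1
  have h3 : (a : L) - (b : L) = 0 := by simpa using h2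
  exact Subtype.ext (by linear_combination (norm := module) h3)

end Symm

lemma dense_ranges
    (G : Set (L ≃ₗᵢ[ℂ] L))
    (hGinv : ∀ u ∈ G, u.symm ∈ G)
    (hcommutant : ∀ A B : L →L[ℂ] L,
      (∀ u ∈ G, ∀ x, A (u x) = u (A x)) →
      (∀ u ∈ G, ∀ x, B (u x) = u (B x)) →
      ∀ x, A (B x) = B (A x))
    (T : L →ₗ.[ℂ] L)
    (hdense : Dense (T.domain : Set L))
    (hsymm : ∀ φ ψ : T.domain, ⟪T φ, (ψ : L)⟫_ℂ = ⟪(φ : L), T ψ⟫_ℂ)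
    (hcomm : ∀ u ∈ G, ∀ φ : T.domain, ∃ h : u (φ : L) ∈ T.domain,
      T ⟨u (φ : L), h⟩ = u (T φ)) :
    Dense ((LinearMap.range (Tp T) : Submodule ℂ L) : Set L) ∧
      Dense ((LinearMap.range (Tm T) : Submodule ℂ L) : Set L) := by
  classical
  set Rp : Submodule ℂ L := LinearMap.range (Tp T) with hRp
  set Rm : Submodule ℂ L := LinearMap.range (Tm T) with hRm
  set K : Submodule ℂ L := Rp.topologicalClosure with hK
  -- the linear isometry `f : Rp → L`, sending `(T+i)φ` to `(T-i)φ`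
  have hinj : Function.Injective (Tp T) := Tp_injective hsymm
  set e0 : T.domain ≃ₗ[ℂ] Rp := LinearEquiv.ofInjective (Tp T) hinj with he0
  have he0_apply : ∀ φ : T.domain, ((e0 φ : L)) = Tp T φ := fun φ => rfl
  set f0 : Rp →ₗ[ℂ] L := (Tm T).comp (e0.symm : Rp →ₗ[ℂ] T.domain) with hf0
  have hf0_apply : ∀ φ : T.domain, f0 (e0 φ) = Tm T φ := by
    intro φ
    simp [hf0, LinearMap.comp_apply]
  have hf0_norm : ∀ v : Rp, ‖f0 v‖ = ‖(v : L)‖ := by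
    intro v
    obtain ⟨φ, rfl⟩ : ∃ φ, e0 φ = v := ⟨e0.symm v, e0.apply_symm_apply v⟩
    rw [hf0_apply, he0_apply]
    exact (norm_Tp_eq_norm_Tm hsymm φ).symm
  set fI : Rp →ₗᵢ[ℂ] L := ⟨f0, hf0_norm⟩ with hfI
  set f : Rp →L[ℂ] L := fI.toContinuousLinearMap with hf
  -- the inclusion `Rp → K` as a continuous linear map with dense range
  set jI : Rp →ₗᵢ[ℂ] K :=
    ⟨Submodule.inclusion Rp.le_topologicalClosure, fun v => rfl⟩ with hjI
  set j : Rp →L[ℂ] K := jI.toContinuousLinearMap with hj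
  have hj_dense : DenseRange j := by
    rw [DenseRange, Subtype.dense_iff]
    intro x hx
    have himg : (Rp : Set L) ⊆ ((↑) : K → L) '' (Set.range j) := by
      intro z hz; exact ⟨⟨z, Rp.le_topologicalClosure hz⟩, ⟨⟨z, hz⟩, rfl⟩, rfl⟩
    have h2 : (K : Set L) = closure (Rp : Set L) := Rp.topologicalClosure_coe
    refine closure_mono himg ?_
    rw [← h2]; exact hx
  have hj_ui : IsUniformInducing j := jI.isometry.isUniformInducing
  -- the extension `W0 : K → L` and the global operator `W`
  set W0 : K →L[ℂ] L := f.extend j with hW0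
  have hW0j : ∀ v : Rp, W0 (j v) = f v := fun v =>
    ContinuousLinearMap.extend_eq f hj_dense hj_ui v
  set W : L →L[ℂ] L := W0.comp (K.orthogonalProjectionOnto) with hW
  have hTp_memK : ∀ φ : T.domain, Tp T φ ∈ K := fun φ =>
    Rp.le_topologicalClosure ⟨φ, rfl⟩
  have hP_self : ∀ k : K, K.orthogonalProjectionOnto (k : L) = k := fun k =>
    Submodule.orthogonalProjectionOnto_mem_subspace_eq_self k
  have hW_onK : ∀ k : K, W (k : L) = W0 k := by
    intro k; rw [hW, ContinuousLinearMap.comp_apply, hP_self]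
  have hW1 : ∀ φ : T.domain, W (Tp T φ) = Tm T φ := by
    intro φ
    have hk : W (Tp T φ) = W0 (⟨Tp T φ, hTp_memK φ⟩ : K) := hW_onK ⟨Tp T φ, hTp_memK φ⟩
    rw [hk]
    have : (⟨Tp T φ, hTp_memK φ⟩ : K) = j ⟨Tp T φ, ⟨φ, rfl⟩⟩ := rfl
    rw [this, hW0j]
    exact hf0_apply φ
  have hW0_norm : ∀ k : K, ‖W0 k‖ = ‖(k : L)‖ := by
    have hcl : IsClosed {k : K | ‖W0 k‖ = ‖(k : L)‖} :=
      isClosed_eq (W0.continuous.norm) (continuous_subtype_val.norm)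
    intro k
    refine hj_dense.induction_on k hcl ?_
    intro v
    rw [hW0j]
    exact hf0_norm v
  have hW_norm : ∀ x : L, ‖W x‖ = ‖(K.orthogonalProjectionOnto x : L)‖ := by
    intro x
    rw [hW, ContinuousLinearMap.comp_apply, hW0_norm]
  have hWrange : ∀ x : L, W x ∈ closure (Rm : Set L) := by
    have hcl : IsClosed {k : K | W0 k ∈ closure (Rm : Set L)} :=
      IsClosed.preimage W0.continuous isClosed_closure
    have hall : ∀ k : K, W0 k ∈ closure (Rm : Set L) := by
      intro k
      refine hj_dense.induction_on k hcl ?_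
      intro v
      rw [hW0j]
      obtain ⟨φ, hφ⟩ := v.2
      have : f v = Tm T φ := by
        have hv : v = e0 φ := Subtype.ext hφ.symm
        rw [hv]; exact hf0_apply φ
      rw [this]
      exact subset_closure ⟨φ, rfl⟩
    intro x
    rw [hW, ContinuousLinearMap.comp_apply]
    exact hall _
  -- equivariance of everything under `u ∈ G`
  have hu_inner : ∀ (u : L ≃ₗᵢ[ℂ] L) (a b : L), ⟪u a, b⟫_ℂ = ⟪a, u.symm b⟫_ℂ := by
    intro u a b
    rw [← u.inner_map_map a (u.symm b), u.apply_symm_apply]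
  have huTp : ∀ u ∈ G, ∀ φ : T.domain, ∃ φ' : T.domain, Tp T φ' = u (Tp T φ) ∧
      Tm T φ' = u (Tm T φ) := by
    intro u hu φ
    obtain ⟨hmem, heq⟩ := hcomm u hu φ
    refine ⟨⟨u (φ : L), hmem⟩, ?_, ?_⟩
    · rw [Tp_apply, Tp_apply, heq]
      simp [map_add, LinearIsometryEquiv.map_smul]
    · rw [Tm_apply, Tm_apply, heq]
      simp [map_sub, LinearIsometryEquiv.map_smul]
  have hu_Rp : ∀ u ∈ G, ∀ z ∈ Rp, u z ∈ Rp := by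
    rintro u hu z ⟨φ, rfl⟩
    obtain ⟨φ', h1, _⟩ := huTp u hu φ
    exact ⟨φ', h1⟩
  have hu_K : ∀ u ∈ G, ∀ x ∈ K, u x ∈ K := by
    intro u hu x hx
    have hmapsto : Set.MapsTo u (Rp : Set L) (Rp : Set L) := fun z hz => hu_Rp u hu z hz
    have := hmapsto.closure (u.continuous)
    have hKeq : (K : Set L) = closure (Rp : Set L) := Rp.topologicalClosure_coe
    have hx' : x ∈ closure (Rp : Set L) := by
      rw [← hKeq]; exact SetLike.mem_coe.mpr hx
    have h2 := this hx'
    have h3 : u x ∈ (K : Set L) := by rw [hKeq]; exact h2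
    exact SetLike.mem_coe.mp h3
  have hPu : ∀ u ∈ G, ∀ x : L,
      ((K.orthogonalProjectionOnto (u x) : L)) = u (K.orthogonalProjectionOnto x : L) := by
    intro u hu x
    refine Submodule.eq_starProjection_of_mem_of_inner_eq_zero
      (hu_K u hu _ (K.orthogonalProjectionOnto x).2) ?_
    intro w hw
    have h1 : u x - u (K.orthogonalProjectionOnto x : L) = u (x - (K.orthogonalProjectionOnto x : L)) := by
      rw [map_sub]
    rw [h1, hu_inner]
    have h2 : x - (K.orthogonalProjectionOnto x : L) ∈ Kᗮ :=
      Submodule.sub_starProjection_mem_orthogonal x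
    exact (Submodule.mem_orthogonal' K _).mp h2 _ (hu_K u.symm (hGinv u hu) _ hw)
  have hWu : ∀ u ∈ G, ∀ x : L, W (u x) = u (W x) := by
    intro u hu
    have hstep : ∀ k : K, W (u (k : L)) = u (W (k : L)) := by
      have hcl : IsClosed {k : K | W (u (k : L)) = u (W (k : L))} :=
        isClosed_eq (W.continuous.comp (u.continuous.comp continuous_subtype_val))
          (u.continuous.comp (W.continuous.comp continuous_subtype_val))
      intro k
      refine hj_dense.induction_on k hcl ?_
      intro v
      obtain ⟨φ, hφ⟩ := v.2
      have hjv : ((j v : K) : L) = Tp T φ := hφ.symm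
      have : W (u ((j v : K) : L)) = u (W ((j v : K) : L)) := by
        rw [hjv]
        obtain ⟨φ', h1, h2⟩ := huTp u hu φ
        rw [← h1, hW1, h2, hW1]
      exact this
    intro x
    have h1 : W (u x) = W0 (K.orthogonalProjectionOnto (u x)) := rfl
    have h2 : K.orthogonalProjectionOnto (u x)
        = K.orthogonalProjectionOnto (u (K.orthogonalProjectionOnto x : L)) := by
      refine Subtype.ext ?_
      rw [hPu u hu x, hPu u hu _, hP_self]
    rw [h1, h2]
    have h3 : W0 (K.orthogonalProjectionOnto (u (K.orthogonalProjectionOnto x : L)))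
        = W (u (K.orthogonalProjectionOnto x : L)) := rfl
    rw [h3, hstep (K.orthogonalProjectionOnto x)]
    congr 1
    exact (hW_onK _).trans rfl
  set Wa : L →L[ℂ] L := ContinuousLinearMap.adjoint W with hWa
  have hWau : ∀ u ∈ G, ∀ x : L, Wa (u x) = u (Wa x) := by
    intro u hu x
    refine ext_inner_right ℂ fun y => ?_
    rw [hWa, ContinuousLinearMap.adjoint_inner_left, hu_inner, ← hWu u.symm (hGinv u hu),
      ← ContinuousLinearMap.adjoint_inner_left W, ← hu_inner]
  have hnormal : ∀ x : L, W (Wa x) = Wa (W x) :=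
    hcommutant W Wa hWu hWau
  have hnorm_eq : ∀ x : L, ‖W x‖ = ‖Wa x‖ := by
    intro x
    have h1 : ⟪W x, W x⟫_ℂ = ⟪Wa x, Wa x⟫_ℂ := by
      rw [← ContinuousLinearMap.adjoint_inner_right W x (W x), ← hnormal,
        ← ContinuousLinearMap.adjoint_inner_left W (Wa x) x]
    rw [inner_self_eq_norm_sq_to_K, inner_self_eq_norm_sq_to_K] at h1
    have h2 : ‖W x‖ ^ 2 = ‖Wa x‖ ^ 2 := by exact_mod_cast h1
    nlinarith [norm_nonneg (W x), norm_nonneg (Wa x)]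
  -- if `x ⊥ Rp` and `x ⊥ Rm` then `x = 0`
  have hboth : ∀ x : L, (∀ φ : T.domain, ⟪Tp T φ, x⟫_ℂ = 0) →
      (∀ φ : T.domain, ⟪Tm T φ, x⟫_ℂ = 0) → x = 0 := by
    intro x h1 h2
    refine hdense.eq_zero_of_inner_right ℂ fun v' hv' => ?_
    obtain ⟨v, rfl⟩ : ∃ v : T.domain, (v : L) = v' := ⟨⟨v', hv'⟩, rfl⟩
    have h3 : ⟪Tp T v - Tm T v, x⟫_ℂ = 0 := by
      rw [inner_sub_left, h1, h2, sub_zero]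
    have h4 : Tp T v - Tm T v = (2 * Complex.I) • (v : L) := by
      rw [Tp_apply, Tm_apply]
      module
    rw [h4, inner_smul_left] at h3
    have h5 : (starRingEnd ℂ) (2 * Complex.I) ≠ 0 := by
      simp [Complex.ext_iff]
    exact (mul_eq_zero.mp h3).resolve_left h5
  -- membership in `Kᗮ` from orthogonality to `Rp`
  have hKperp : ∀ x : L, (∀ φ : T.domain, ⟪Tp T φ, x⟫_ℂ = 0) → x ∈ Kᗮ := by
    intro x hx
    intro v hv
    have hcl : IsClosed {z : L | ⟪z, x⟫_ℂ = 0} :=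
      isClosed_eq (Continuous.inner continuous_id continuous_const) continuous_const
    have hsub : (Rp : Set L) ⊆ {z : L | ⟪z, x⟫_ℂ = 0} := by
      rintro z ⟨φ, rfl⟩; exact hx φ
    have : (K : Set L) ⊆ {z : L | ⟪z, x⟫_ℂ = 0} := by
      rw [Rp.topologicalClosure_coe]
      exact closure_minimal hsub hcl
    exact this hv
  constructor
  · -- `Rp` dense
    rw [Submodule.dense_iff_topologicalClosure_eq_top, Submodule.topologicalClosure_eq_top_iff]
    rw [Submodule.eq_bot_iff]
    intro x hx
    have hx' : ∀ φ : T.domain, ⟪Tp T φ, x⟫_ℂ = 0 := by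
      intro φ
      exact hx _ ⟨φ, rfl⟩
    have hxK : x ∈ Kᗮ := hKperp x hx'
    have hPx : K.orthogonalProjectionOnto x = 0 :=
      Submodule.orthogonalProjectionOnto_apply_of_mem_orthogonal hxK
    have hWx : W x = 0 := by
      have := hW_norm x
      rw [hPx] at this
      simp only [ZeroMemClass.coe_zero, norm_zero] at this
      exact norm_eq_zero.mp this
    have hWax : Wa x = 0 := by
      have := hnorm_eq x
      rw [hWx, norm_zero] at this
      exact norm_eq_zero.mp (this.symm.le.antisymm (norm_nonneg _))
    have hm : ∀ φ : T.domain, ⟪Tm T φ, x⟫_ℂ = 0 := by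
      intro φ
      rw [← inner_conj_symm]
      have : ⟪x, Tm T φ⟫_ℂ = 0 := by
        rw [← hW1 φ, ← ContinuousLinearMap.adjoint_inner_left W, ← hWa, hWax, inner_zero_left]
      rw [this, map_zero]
    exact hboth x hx' hm
  · -- `Rm` dense
    rw [Submodule.dense_iff_topologicalClosure_eq_top, Submodule.topologicalClosure_eq_top_iff]
    rw [Submodule.eq_bot_iff]
    intro x hx
    have hm : ∀ φ : T.domain, ⟪Tm T φ, x⟫_ℂ = 0 := by
      intro φ; exact hx _ ⟨φ, rfl⟩
    have hWax : Wa x = 0 := by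
      refine ext_inner_right ℂ fun y => ?_
      rw [hWa, ContinuousLinearMap.adjoint_inner_left, inner_zero_left]
      -- ⟪x, W y⟫ = 0 since W y ∈ closure Rm and x ⊥ Rm
      have hcl : IsClosed {z : L | ⟪x, z⟫_ℂ = 0} :=
        isClosed_eq (Continuous.inner continuous_const continuous_id) continuous_const
      have hsub : (Rm : Set L) ⊆ {z : L | ⟪x, z⟫_ℂ = 0} := by
        rintro z ⟨φ, rfl⟩
        show ⟪x, Tm T φ⟫_ℂ = 0
        rw [← inner_conj_symm, hm φ, map_zero]
      exact closure_minimal hsub hcl (hWrange y)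
    have hWx : W x = 0 := by
      have := hnorm_eq x
      rw [hWax, norm_zero] at this
      exact norm_eq_zero.mp this
    have hPx : ((K.orthogonalProjectionOnto x : L)) = 0 := by
      have := hW_norm x
      rw [hWx, norm_zero] at this
      exact (norm_eq_zero.mp this.symm)
    have hxK : x ∈ Kᗮ := by
      have h1 : x - (K.orthogonalProjectionOnto x : L) ∈ Kᗮ :=
        Submodule.sub_starProjection_mem_orthogonal x
      rwa [hPx, sub_zero] at h1
    have hp : ∀ φ : T.domain, ⟪Tp T φ, x⟫_ℂ = 0 := by
      intro φ
      exact (Submodule.mem_orthogonal K x).mp hxK _ (hTp_memK φ)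
    exact hboth x hp hm

end EssSAProof

open Filter Topology in
theorem essentiallySelfAdjoint_of_abelian_commutant'
    {L : Type*} [NormedAddCommGroup L] [InnerProductSpace ℂ L] [CompleteSpace L]
    (G : Set (L ≃ₗᵢ[ℂ] L))
    (hGinv : ∀ u ∈ G, u.symm ∈ G)
    (hcommutant : ∀ A B : L →L[ℂ] L,
      (∀ u ∈ G, ∀ x, A (u x) = u (A x)) →
      (∀ u ∈ G, ∀ x, B (u x) = u (B x)) →
      ∀ x, A (B x) = B (A x))
    (T : L →ₗ.[ℂ] L)
    (hdense : Dense (T.domain : Set L))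
    (hsymm : ∀ φ ψ : T.domain, ⟪T φ, (ψ : L)⟫_ℂ = ⟪(φ : L), T ψ⟫_ℂ)
    (hcomm : ∀ u ∈ G, ∀ φ : T.domain, ∃ h : u (φ : L) ∈ T.domain,
      T ⟨u (φ : L), h⟩ = u (T φ)) :
    T.adjoint.adjoint = T.adjoint := by
  classical
  obtain ⟨hRp_dense, hRm_dense⟩ :=
    EssSAProof.dense_ranges G hGinv hcommutant T hdense hsymm hcomm
  have hT_fa : T.IsFormalAdjoint T := hsymm
  have hTleTa : T ≤ T.adjoint := hT_fa.le_adjoint hdense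
  have hdense' : Dense (T.adjoint.domain : Set L) :=
    hdense.mono (fun z hz => hTleTa.1 hz)
  have hfa := LinearPMap.adjoint_isFormalAdjoint (T := T) hdense
  -- every element of the adjoint domain is a graph limit of elements of `T.domain`
  have happrox : ∀ x : T.adjoint.domain, ∃ φ : ℕ → T.domain,
      Tendsto (fun n => ((φ n : L))) atTop (𝓝 (x : L)) ∧
      Tendsto (fun n => T (φ n)) atTop (𝓝 (T.adjoint x)) := by
    intro x
    set z : L := T.adjoint x + Complex.I • (x : L) with hz
    have hchoice : ∀ n : ℕ, ∃ φ : T.domain,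
        ‖EssSAProof.Tp T φ - z‖ < 1/(n+1) := by
      intro n
      have hm : z ∈ closure ((LinearMap.range (EssSAProof.Tp T) : Submodule ℂ L) : Set L) :=
        hRp_dense z
      rw [Metric.mem_closure_iff] at hm
      obtain ⟨w, hw, hd⟩ := hm (1/(n+1)) (by positivity)
      obtain ⟨φ, rfl⟩ := hw
      refine ⟨φ, ?_⟩
      rw [dist_comm, dist_eq_norm] at hd
      exact hd
    choose φ hφ using hchoice
    have htendz : Tendsto (fun n => EssSAProof.Tp T (φ n)) atTop (𝓝 z) := by
      rw [tendsto_iff_norm_sub_tendsto_zero]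
      refine squeeze_zero (fun n => norm_nonneg _) (fun n => (hφ n).le) ?_
      exact tendsto_one_div_add_atTop_nhds_zero_nat
    have hCauchy : CauchySeq (fun n => ((φ n : L))) := by
      have hTpC := htendz.cauchySeq
      rw [Metric.cauchySeq_iff] at hTpC ⊢
      intro ε hε
      obtain ⟨N, hN⟩ := hTpC ε hε
      refine ⟨N, fun m hm n hn => lt_of_le_of_lt ?_ (hN m hm n hn)⟩
      rw [dist_eq_norm, dist_eq_norm]
      calc ‖(φ m : L) - (φ n : L)‖ = ‖((φ m - φ n : T.domain) : L)‖ := by push_cast; ring_nf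
        _ ≤ ‖EssSAProof.Tp T (φ m - φ n)‖ := EssSAProof.norm_le_norm_Tp hsymm _
        _ = ‖EssSAProof.Tp T (φ m) - EssSAProof.Tp T (φ n)‖ := by rw [map_sub]
    obtain ⟨x₀, htendx0⟩ := cauchySeq_tendsto_of_complete hCauchy
    have hTeq : ∀ ψ : T.domain, T ψ = EssSAProof.Tp T ψ - Complex.I • (ψ : L) := by
      intro ψ; rw [EssSAProof.Tp_apply]; abel
    have htendT : Tendsto (fun n => T (φ n)) atTop (𝓝 (z - Complex.I • x₀)) := by
      have h1 : Tendsto (fun n => EssSAProof.Tp T (φ n) - Complex.I • ((φ n : L)))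
          atTop (𝓝 (z - Complex.I • x₀)) := htendz.sub (htendx0.const_smul _)
      refine h1.congr fun n => (hTeq (φ n)).symm
    have hw : ∀ ψ : T.domain, ⟪z - Complex.I • x₀, (ψ : L)⟫_ℂ = ⟪x₀, T ψ⟫_ℂ := by
      intro ψ
      have h1 : Tendsto (fun n => ⟪T (φ n), (ψ : L)⟫_ℂ) atTop
          (𝓝 ⟪z - Complex.I • x₀, (ψ : L)⟫_ℂ) := htendT.inner tendsto_const_nhds
      have h2 : Tendsto (fun n => ⟪((φ n : L)), T ψ⟫_ℂ) atTop (𝓝 ⟪x₀, T ψ⟫_ℂ) :=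
        htendx0.inner tendsto_const_nhds
      have h3 : ∀ n, ⟪T (φ n), (ψ : L)⟫_ℂ = ⟪((φ n : L)), T ψ⟫_ℂ := fun n => hsymm (φ n) ψ
      exact tendsto_nhds_unique (h1.congr h3) h2
    have hx0mem : x₀ ∈ T.adjoint.domain :=
      LinearPMap.mem_adjoint_domain_of_exists x₀ ⟨z - Complex.I • x₀, hw⟩
    set xx0 : T.adjoint.domain := ⟨x₀, hx0mem⟩ with hxx0
    have hTx0 : T.adjoint xx0 = z - Complex.I • x₀ :=
      LinearPMap.adjoint_apply_eq hdense xx0 hw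
    -- the difference is orthogonal to the dense range of `T - i`, hence zero
    have hdval : T.adjoint (x - xx0) = T.adjoint x - T.adjoint xx0 := by
      exact map_sub T.adjoint.toFun x xx0
    have hdiff : T.adjoint (x - xx0) = (-Complex.I) • ((x : L) - x₀) := by
      rw [hdval, hTx0, hz]
      module
    have hd0 : (x : L) - x₀ = 0 := by
      refine hRm_dense.eq_zero_of_inner_left ℂ fun v' hv' => ?_
      obtain ⟨v, rfl⟩ : ∃ v : LinearMap.range (EssSAProof.Tm T), (v : L) = v' := ⟨⟨v', hv'⟩, rfl⟩
      obtain ⟨ψ, hψ⟩ := v.2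
      show ⟪(x : L) - x₀, (v : L)⟫_ℂ = 0
      rw [← hψ]
      have h1 : ⟪(x : L) - x₀, T ψ⟫_ℂ = Complex.I * ⟪(x : L) - x₀, (ψ : L)⟫_ℂ := by
        have h2 := hfa (x - xx0) ψ
        have h3 : ((x - xx0 : T.adjoint.domain) : L) = (x : L) - x₀ := rfl
        rw [hdiff, h3] at h2
        rw [← h2, inner_smul_left, Complex.conj_neg_I]
      rw [EssSAProof.Tm_apply, inner_sub_right, h1, inner_smul_right]
      ring
    have hx0eq : x₀ = (x : L) := by
      have := sub_eq_zero.mp hd0; exact this.symm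
    refine ⟨φ, ?_, ?_⟩
    · rwa [← hx0eq]
    · have : z - Complex.I • x₀ = T.adjoint x := by rw [hx0eq, hz]; module
      rwa [this] at htendT
  -- the adjoint is symmetric
  have hadj_symm : ∀ x y : T.adjoint.domain,
      ⟪T.adjoint x, (y : L)⟫_ℂ = ⟪(x : L), T.adjoint y⟫_ℂ := by
    intro x y
    obtain ⟨φ, hφx, hφT⟩ := happrox x
    have h1 : Tendsto (fun n => ⟪T (φ n), (y : L)⟫_ℂ) atTop
        (𝓝 ⟪T.adjoint x, (y : L)⟫_ℂ) := hφT.inner tendsto_const_nhds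
    have h2 : Tendsto (fun n => ⟪((φ n : L)), T.adjoint y⟫_ℂ) atTop
        (𝓝 ⟪(x : L), T.adjoint y⟫_ℂ) := hφx.inner tendsto_const_nhds
    have h3 : ∀ n, ⟪T (φ n), (y : L)⟫_ℂ = ⟪((φ n : L)), T.adjoint y⟫_ℂ := by
      intro n
      calc ⟪T (φ n), (y : L)⟫_ℂ = (starRingEnd ℂ) ⟪(y : L), T (φ n)⟫_ℂ :=
            (inner_conj_symm _ _).symm
        _ = (starRingEnd ℂ) ⟪T.adjoint y, ((φ n : L))⟫_ℂ := by rw [hfa y (φ n)]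
        _ = ⟪((φ n : L)), T.adjoint y⟫_ℂ := inner_conj_symm _ _
    exact tendsto_nhds_unique (h1.congr h3) h2
  have hfa2 : T.adjoint.IsFormalAdjoint T.adjoint := hadj_symm
  have hle1 : T.adjoint ≤ T.adjoint.adjoint := hfa2.le_adjoint hdense'
  have hfa3 : T.IsFormalAdjoint T.adjoint.adjoint := by
    intro a b
    have hamem : (a : L) ∈ T.adjoint.domain := hTleTa.1 a.2
    set a' : T.adjoint.domain := ⟨(a : L), hamem⟩ with ha'
    have hTa : T a = T.adjoint a' := hTleTa.2 rfl
    have h4 := LinearPMap.adjoint_isFormalAdjoint (T := T.adjoint) hdense' b a'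
    calc ⟪T a, (b : L)⟫_ℂ = ⟪T.adjoint a', (b : L)⟫_ℂ := by rw [hTa]
      _ = (starRingEnd ℂ) ⟪(b : L), T.adjoint a'⟫_ℂ := (inner_conj_symm _ _).symm
      _ = (starRingEnd ℂ) ⟪T.adjoint.adjoint b, ((a' : L))⟫_ℂ := by rw [h4]
      _ = ⟪((a' : L)), T.adjoint.adjoint b⟫_ℂ := inner_conj_symm _ _
      _ = ⟪(a : L), T.adjoint.adjoint b⟫_ℂ := rfl
  have hle2 : T.adjoint.adjoint ≤ T.adjoint := hfa3.le_adjoint hdense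
  exact le_antisymm hle2 hle1


/-- If a symmetric densely defined operator `T` on a complex Hilbert space `L` commutes with a
set `G` of unitary operators (closed under inverses) whose commutant is abelian, then `T` is
essentially self-adjoint, i.e. `T** = T*` (equivalently, the adjoint `T*` is self-adjoint, and
the closure `T**` of `T` is self-adjoint). -/
theorem essentiallySelfAdjoint_of_abelian_commutant
    {L : Type*} [NormedAddCommGroup L] [InnerProductSpace ℂ L] [CompleteSpace L]
    (G : Set (L ≃ₗᵢ[ℂ] L))
    (hGinv : ∀ u ∈ G, u.symm ∈ G)
    (hcommutant : ∀ A B : L →L[ℂ] L,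
      (∀ u ∈ G, ∀ x, A (u x) = u (A x)) →
      (∀ u ∈ G, ∀ x, B (u x) = u (B x)) →
      ∀ x, A (B x) = B (A x))
    (T : L →ₗ.[ℂ] L)
    (hdense : Dense (T.domain : Set L))
    (hsymm : ∀ φ ψ : T.domain, ⟪T φ, (ψ : L)⟫_ℂ = ⟪(φ : L), T ψ⟫_ℂ)
    (hcomm : ∀ u ∈ G, ∀ φ : T.domain, ∃ h : u (φ : L) ∈ T.domain,
      T ⟨u (φ : L), h⟩ = u (T φ)) :
    T.adjoint.adjoint = T.adjoint := by
  exact essentiallySelfAdjoint_of_abelian_commutant' G hGinv hcommutant T hdense hsymm hcomm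
end

section
/- Let ℍ be the quaternions with Euclidean norm ‖·‖ and Lebesgue measure, and let F : ℍ → ℂ be continuous, bounded, and integrable. Then for every Λ > 0, the double integral of F(x·y) over the region {(x, y) : ‖x‖ ≤ Λ, ‖y‖ ≤ Λ} equals 2π² times the integral over {z : ‖z‖ ≤ Λ²} of log(Λ²/‖z‖)·F(z); that is, ∫_{‖x‖≤Λ} ∫_{‖y‖≤Λ} F(x·y) dx dy = 2π² ∫_{‖z‖≤Λ²} log(Λ²/‖z‖) · F(z) dz. -/
open MeasureTheory Measure Metric
open scoped Quaternion

noncomputable instance : MeasurableSpace ℍ[ℝ] := borel _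
instance : BorelSpace ℍ[ℝ] := ⟨rfl⟩

/-- Lebesgue measure on the quaternions, obtained by identifying `ℍ` with `ℝ⁴` via the
linear isometry with Euclidean 4-space. -/
noncomputable def quatVolume : Measure ℍ[ℝ] :=
  Measure.map (⇑Quaternion.linearIsometryEquivTuple.symm) volume

instance : IsAddHaarMeasure quatVolume := by
  have : quatVolume = Measure.map (Quaternion.linearIsometryEquivTuple.symm.toLinearEquiv) volume := rfl
  rw [this]; infer_instance

lemma quat_ball_one : quatVolume (ball (0:ℍ[ℝ]) 1) = ENNReal.ofReal (Real.pi^2/2) := by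
  rw [quatVolume, Measure.map_apply
    (Quaternion.linearIsometryEquivTuple.symm.continuous.measurable) measurableSet_ball]
  have : (⇑Quaternion.linearIsometryEquivTuple.symm) ⁻¹' (ball (0:ℍ[ℝ]) 1)
      = ball (0 : EuclideanSpace ℝ (Fin 4)) 1 := by
    have h0 : Quaternion.linearIsometryEquivTuple.symm.symm (0:ℍ[ℝ]) = 0 :=
      _root_.map_zero _
    rw [Quaternion.linearIsometryEquivTuple.symm.preimage_ball 0 1, h0]
  rw [this, EuclideanSpace.volume_ball]
  have h3 : ((Fintype.card (Fin 4) : ℝ) / 2 + 1) = 3 := by norm_num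
  rw [h3]
  have hΓ : Real.Gamma 3 = 2 := by
    have := Real.Gamma_nat_eq_factorial 2
    norm_num at this
    convert this using 2
    norm_num
  have hs : Real.sqrt Real.pi ^ Fintype.card (Fin 4) = Real.pi ^ 2 := by
    rw [show Fintype.card (Fin 4) = 4 from rfl, show (4:ℕ) = 2*2 from rfl, pow_mul,
      Real.sq_sqrt Real.pi_nonneg]
  rw [hΓ, hs]
  simp

lemma abs_det_mulLeft (x : ℍ[ℝ]) (hx : x ≠ 0) :
    |LinearMap.det (LinearMap.mulLeft ℝ x)| = ‖x‖^4 := by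
  set u : ℍ[ℝ] := ‖x‖⁻¹ • x with hu
  have hnx : (0:ℝ) < ‖x‖ := norm_pos_iff.mpr hx
  have hnu : ‖u‖ = 1 := by
    rw [hu, norm_smul, norm_inv, norm_norm, inv_mul_cancel₀ hnx.ne']
  have hdecomp : LinearMap.mulLeft ℝ x = ‖x‖ • LinearMap.mulLeft ℝ u := by
    apply LinearMap.ext; intro y
    show x * y = ‖x‖ • (u * y)
    rw [← smul_mul_assoc, hu, smul_smul, mul_inv_cancel₀ hnx.ne', one_smul]
  -- |det (mulLeft u)| = 1 via measure of unit ball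
  have himg : (LinearMap.mulLeft ℝ u) '' (ball (0:ℍ[ℝ]) 1) = ball (0:ℍ[ℝ]) 1 := by
    ext z
    simp only [Set.mem_image, mem_ball_zero_iff, LinearMap.mulLeft_apply]
    constructor
    · rintro ⟨y, hy, rfl⟩
      rwa [norm_mul, hnu, one_mul]
    · intro hz
      refine ⟨u⁻¹ * z, ?_, ?_⟩
      · rw [norm_mul, norm_inv, hnu, inv_one, one_mul]; exact hz
      · rw [← mul_assoc, mul_inv_cancel₀ (by rw [← norm_pos_iff, hnu]; norm_num), one_mul]
  have hb := Measure.addHaar_image_linearMap quatVolume (LinearMap.mulLeft ℝ u) (ball (0:ℍ[ℝ]) 1)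
  rw [himg] at hb
  have hbp : quatVolume (ball (0:ℍ[ℝ]) 1) ≠ 0 := (measure_ball_pos _ _ one_pos).ne'
  have hbt : quatVolume (ball (0:ℍ[ℝ]) 1) ≠ ⊤ := measure_ball_lt_top.ne
  have hdet1 : |LinearMap.det (LinearMap.mulLeft ℝ u)| = 1 := by
    have h1 : ENNReal.ofReal |LinearMap.det (LinearMap.mulLeft ℝ u)|
        * quatVolume (ball (0:ℍ[ℝ]) 1) = quatVolume (ball (0:ℍ[ℝ]) 1) := hb.symm
    rw [mul_comm, ENNReal.mul_eq_left hbp hbt, ENNReal.ofReal_eq_one] at h1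
    exact h1
  rw [hdecomp, LinearMap.det_smul, Quaternion.finrank_eq_four, abs_mul, abs_pow,
    abs_norm, hdet1, mul_one]

lemma integral_comp_mulLeft (x : ℍ[ℝ]) (hx : x ≠ 0) (g : ℍ[ℝ] → ℂ)
    (hg : AEStronglyMeasurable g quatVolume) :
    ∫ y, g (x * y) ∂quatVolume = ((‖x‖^4)⁻¹ : ℝ) • ∫ z, g z ∂quatVolume := by
  have hnx : (0:ℝ) < ‖x‖ := norm_pos_iff.mpr hx
  have hdet : LinearMap.det (LinearMap.mulLeft ℝ x) ≠ 0 := by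
    intro h
    have := abs_det_mulLeft x hx
    rw [h, abs_zero] at this
    exact (pow_pos hnx 4).ne this
  have hmap := Measure.map_linearMap_addHaar_eq_smul_addHaar quatVolume hdet
  have hac : (ENNReal.ofReal |(LinearMap.det (LinearMap.mulLeft ℝ x))⁻¹| • quatVolume)
      ≪ quatVolume := smul_absolutelyContinuous
  have hmeas : Measurable (⇑(LinearMap.mulLeft ℝ x)) :=
    (continuous_const.mul continuous_id).measurable
  have h1 : ∫ y, g (x * y) ∂quatVolume
      = ∫ z, g z ∂(Measure.map (⇑(LinearMap.mulLeft ℝ x)) quatVolume) := by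
    symm
    rw [integral_map hmeas.aemeasurable]
    · rfl
    · rw [hmap]; exact hg.mono_ac hac
  rw [h1, hmap, integral_smul_measure, ENNReal.toReal_ofReal (abs_nonneg _), abs_inv,
    abs_det_mulLeft x hx]

lemma inner_cov (F : ℍ[ℝ] → ℂ) (hFc : Continuous F) (x : ℍ[ℝ]) (hx : x ≠ 0) (Λ : ℝ) :
    ∫ y in closedBall (0:ℍ[ℝ]) Λ, F (x * y) ∂quatVolume
      = ((‖x‖^4)⁻¹ : ℝ) • ∫ z in closedBall (0:ℍ[ℝ]) (Λ * ‖x‖), F z ∂quatVolume := by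
  have hnx : (0:ℝ) < ‖x‖ := norm_pos_iff.mpr hx
  set g : ℍ[ℝ] → ℂ := Set.indicator (closedBall (0:ℍ[ℝ]) (Λ * ‖x‖)) F with hg
  have hgm : AEStronglyMeasurable g quatVolume :=
    (hFc.stronglyMeasurable.indicator measurableSet_closedBall).aestronglyMeasurable
  have key : ∀ y : ℍ[ℝ], g (x * y) = Set.indicator (closedBall (0:ℍ[ℝ]) Λ)
      (fun y => F (x * y)) y := by
    intro y
    have hiff : x * y ∈ closedBall (0:ℍ[ℝ]) (Λ * ‖x‖) ↔ y ∈ closedBall (0:ℍ[ℝ]) Λ := by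
      rw [mem_closedBall_zero_iff, mem_closedBall_zero_iff, norm_mul, mul_comm Λ ‖x‖]
      exact mul_le_mul_iff_right₀ hnx
    classical
    simp only [hg]
    rw [Set.indicator_apply, Set.indicator_apply]
    exact if_congr hiff rfl rfl
  rw [← integral_indicator measurableSet_closedBall, ← integral_indicator measurableSet_closedBall]
  calc ∫ y, Set.indicator (closedBall (0:ℍ[ℝ]) Λ) (fun y => F (x * y)) y ∂quatVolume
      = ∫ y, g (x * y) ∂quatVolume := by
        exact integral_congr_ae (Filter.Eventually.of_forall fun y => (key y).symm)
    _ = ((‖x‖^4)⁻¹ : ℝ) • ∫ z, g z ∂quatVolume := integral_comp_mulLeft x hx g hgm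

lemma polar_out (Λ : ℝ) (ψ : ℝ → ℂ) :
    ∫ x in closedBall (0:ℍ[ℝ]) Λ, ((‖x‖^4)⁻¹ : ℝ) • ψ ‖x‖ ∂quatVolume
      = ((2:ℝ) * Real.pi^2) • ∫ s in Set.Ioo 0 Λ, (s⁻¹ : ℝ) • ψ s := by
  classical
  set g : ℝ → ℂ := fun s => ((s^4)⁻¹ : ℝ) • ψ s with hgdef
  set f : ℝ → ℂ := Set.indicator (Set.Iic Λ) g with hfdef
  have h1 : ∫ x in closedBall (0:ℍ[ℝ]) Λ, ((‖x‖^4)⁻¹ : ℝ) • ψ ‖x‖ ∂quatVolume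
      = ∫ x, f ‖x‖ ∂quatVolume := by
    rw [← integral_indicator measurableSet_closedBall]
    refine integral_congr_ae (Filter.Eventually.of_forall fun x => ?_)
    simp only [hfdef, Set.indicator_apply, Set.mem_Iic, mem_closedBall_zero_iff]
    rfl
  rw [h1, integral_fun_norm_addHaar quatVolume f, Quaternion.finrank_eq_four, measureReal_def, quat_ball_one,
    ENNReal.toReal_ofReal (by positivity)]
  have h2 : ∫ s in Set.Ioi (0:ℝ), s ^ (4-1) • f s = ∫ s in Set.Ioo 0 Λ, (s⁻¹ : ℝ) • ψ s := by
    have e1 : ∀ s : ℝ, s ^ (3:ℕ) • f s = Set.indicator (Set.Iic Λ)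
        (fun s => s ^ (3:ℕ) • g s) s := by
      intro s
      rw [hfdef, Set.indicator_apply, Set.indicator_apply]
      by_cases h : s ∈ Set.Iic Λ <;> simp [h]
    calc ∫ s in Set.Ioi (0:ℝ), s ^ (4-1) • f s
        = ∫ s in Set.Ioi (0:ℝ), Set.indicator (Set.Iic Λ) (fun s => s ^ (3:ℕ) • g s) s := by
          refine integral_congr_ae (Filter.Eventually.of_forall fun s => ?_)
          exact e1 s
      _ = ∫ s in Set.Ioc 0 Λ, s ^ (3:ℕ) • g s := by
          rw [integral_indicator measurableSet_Iic, Measure.restrict_restrict measurableSet_Iic,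
            Set.inter_comm, Set.Ioi_inter_Iic]
      _ = ∫ s in Set.Ioo 0 Λ, s ^ (3:ℕ) • g s := by rw [integral_Ioc_eq_integral_Ioo]
      _ = ∫ s in Set.Ioo 0 Λ, (s⁻¹ : ℝ) • ψ s := by
          refine setIntegral_congr_fun measurableSet_Ioo fun s hs => ?_
          rw [hgdef]
          have hs0 : s ≠ 0 := (hs.1).ne'
          rw [smul_smul]
          congr 1
          field_simp
  rw [h2, ← Nat.cast_smul_eq_nsmul ℝ, smul_smul]
  congr 1
  push_cast
  ring

lemma fubini_step (F : ℍ[ℝ] → ℂ) (hFc : Continuous F) {C : ℝ} (hC : ∀ z, ‖F z‖ ≤ C)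
    (hFi : Integrable F quatVolume) (Λ : ℝ) (hΛ : 0 < Λ) :
    ∫ s in Set.Ioo (0:ℝ) Λ, (s⁻¹ : ℝ) • (∫ z in closedBall (0:ℍ[ℝ]) (Λ * s), F z ∂quatVolume)
      = ∫ z in closedBall (0:ℍ[ℝ]) (Λ^2), (Real.log (Λ^2/‖z‖) : ℂ) * F z ∂quatVolume := by
  classical
  have hC0 : 0 ≤ C := le_trans (norm_nonneg _) (hC 0)
  set ν : Measure ℝ := volume.restrict (Set.Ioo (0:ℝ) Λ) with hν
  set k : ℝ → ℍ[ℝ] → ℂ := fun s => Set.indicator (closedBall (0:ℍ[ℝ]) (Λ*s))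
    (fun z => (s⁻¹ : ℝ) • F z) with hk
  have hS : MeasurableSet {p : ℝ × ℍ[ℝ] | ‖p.2‖ ≤ Λ * p.1} :=
    (isClosed_le (continuous_norm.comp continuous_snd)
      (continuous_const.mul continuous_fst)).measurableSet
  have huncurry : Function.uncurry k = Set.indicator {p : ℝ × ℍ[ℝ] | ‖p.2‖ ≤ Λ * p.1}
      (fun p => (p.1⁻¹ : ℝ) • F p.2) := by
    funext p
    simp only [Function.uncurry, hk, Set.indicator_apply, mem_closedBall_zero_iff,
      Set.mem_setOf_eq]
  have hKsm : AEStronglyMeasurable (Function.uncurry k) (ν.prod quatVolume) := by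
    rw [huncurry]
    exact (((measurable_fst.inv).smul
      (hFc.measurable.comp measurable_snd)).indicator hS).stronglyMeasurable.aestronglyMeasurable
  have hslice : ∀ s : ℝ, Integrable (k s) quatVolume := fun s =>
    ((hFi.smul ((s⁻¹ : ℝ) : ℝ)).indicator measurableSet_closedBall)
  set V : ℝ := (quatVolume (ball (0:ℍ[ℝ]) 1)).toReal with hV
  have hV0 : 0 ≤ V := ENNReal.toReal_nonneg
  have hbound : ∀ s ∈ Set.Ioo (0:ℝ) Λ,
      ∫ z, ‖k s z‖ ∂quatVolume ≤ C * V * Λ^7 := by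
    intro s hs
    have hs0 : 0 < s := hs.1
    have hΛs : 0 ≤ Λ * s := by positivity
    have hn : ∀ z, ‖k s z‖ = Set.indicator (closedBall (0:ℍ[ℝ]) (Λ*s))
        (fun z => ‖(s⁻¹ : ℝ) • F z‖) z := fun z => by
      rw [hk]; exact norm_indicator_eq_indicator_norm _ _
    calc ∫ z, ‖k s z‖ ∂quatVolume
        = ∫ z in closedBall (0:ℍ[ℝ]) (Λ*s), ‖(s⁻¹ : ℝ) • F z‖ ∂quatVolume := by
          rw [← integral_indicator measurableSet_closedBall]
          exact integral_congr_ae (Filter.Eventually.of_forall hn)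
      _ ≤ ∫ _z in closedBall (0:ℍ[ℝ]) (Λ*s), s⁻¹ * C ∂quatVolume := by
          refine setIntegral_mono_on ((hFi.smul ((s⁻¹:ℝ))).norm.integrableOn)
            ((integrableOn_const_iff).mpr (Or.inr measure_closedBall_lt_top))
            measurableSet_closedBall (fun z _ => ?_)
          rw [norm_smul, Real.norm_eq_abs, abs_of_nonneg (inv_nonneg.mpr hs0.le)]
          exact mul_le_mul_of_nonneg_left (hC z) (inv_nonneg.mpr hs0.le)
      _ ≤ C * V * Λ^7 := by
          rw [setIntegral_const, measureReal_def]
          rw [Measure.addHaar_closedBall quatVolume 0 hΛs, Quaternion.finrank_eq_four]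
          rw [ENNReal.toReal_mul, ENNReal.toReal_ofReal (by positivity)]
          have hsΛ : s ≤ Λ := hs.2.le
          have : (Λ * s)^4 * V * (s⁻¹ * C) = C * V * (Λ^4 * s^3) := by
            field_simp
          rw [smul_eq_mul, this]
          have h3 : s^3 ≤ Λ^3 := pow_le_pow_left₀ hs0.le hsΛ 3
          calc C * V * (Λ^4 * s^3) ≤ C * V * (Λ^4 * Λ^3) := by gcongr
            _ = C * V * Λ^7 := by ring
  have hnormint : Integrable (fun s => ∫ z, ‖k s z‖ ∂quatVolume) ν := by
    refine Integrable.mono' (g := fun _ : ℝ => C * V * Λ^7)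
      ((integrableOn_const_iff).mpr (Or.inr measure_Ioo_lt_top)) ?_ ?_
    · exact hKsm.norm.integral_prod_right'
    · rw [hν, ae_restrict_iff' measurableSet_Ioo]
      refine Filter.Eventually.of_forall fun s hs => ?_
      rw [Real.norm_eq_abs, abs_of_nonneg (integral_nonneg fun z => norm_nonneg _)]
      exact hbound s hs
  have hK : Integrable (Function.uncurry k) (ν.prod quatVolume) := by
    refine (integrable_prod_iff hKsm).mpr ⟨Filter.Eventually.of_forall fun s => ?_, hnormint⟩
    exact hslice s
  have hswap : ∫ s, (∫ z, k s z ∂quatVolume) ∂ν = ∫ z, (∫ s, k s z ∂ν) ∂quatVolume :=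
    integral_integral_swap hK
  have hL : ∫ s in Set.Ioo (0:ℝ) Λ, (s⁻¹ : ℝ) • (∫ z in closedBall (0:ℍ[ℝ]) (Λ * s), F z ∂quatVolume)
      = ∫ s, (∫ z, k s z ∂quatVolume) ∂ν := by
    refine setIntegral_congr_fun measurableSet_Ioo fun s _ => ?_
    rw [hk]
    rw [integral_indicator measurableSet_closedBall, integral_smul]
  have hinner : ∀ z : ℍ[ℝ], z ≠ 0 → (∫ s, k s z ∂ν)
      = Set.indicator (closedBall (0:ℍ[ℝ]) (Λ^2))
          (fun z => (Real.log (Λ^2/‖z‖) : ℂ) * F z) z := by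
    intro z hz
    have hnz : 0 < ‖z‖ := norm_pos_iff.mpr hz
    set a := ‖z‖ / Λ with ha
    have ha0 : 0 < a := div_pos hnz hΛ
    have hiff : ∀ s : ℝ, (‖z‖ ≤ Λ * s) ↔ (a ≤ s) := fun s => by
      rw [ha, div_le_iff₀ hΛ, mul_comm s Λ]
    have hksz : ∀ s : ℝ, k s z = (Set.indicator (Set.Ici a) (fun s : ℝ => s⁻¹) s) • F z := by
      intro s
      rw [hk]
      simp only [Set.indicator_apply, mem_closedBall_zero_iff, Set.mem_Ici]
      by_cases h : ‖z‖ ≤ Λ * s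
      · rw [if_pos h, if_pos ((hiff s).mp h)]
      · rw [if_neg h, if_neg (fun hh => h ((hiff s).mpr hh)), zero_smul]
    rw [integral_congr_ae (Filter.Eventually.of_forall hksz), integral_smul_const]
    have hr : ∫ s, Set.indicator (Set.Ici a) (fun s : ℝ => s⁻¹) s ∂ν
        = ∫ s in Set.Ioo 0 Λ ∩ Set.Ici a, s⁻¹ := by
      rw [hν, integral_indicator measurableSet_Ici,
        Measure.restrict_restrict measurableSet_Ici, Set.inter_comm]
    by_cases hcase : ‖z‖ < Λ^2
    · have haΛ : a < Λ := by
        rw [ha, div_lt_iff₀ hΛ]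
        nlinarith
      have hset : Set.Ioo 0 Λ ∩ Set.Ici a = Set.Ico a Λ := by
        ext s
        simp only [Set.mem_inter_iff, Set.mem_Ioo, Set.mem_Ici, Set.mem_Ico]
        constructor
        · rintro ⟨⟨_, h2⟩, h3⟩; exact ⟨h3, h2⟩
        · rintro ⟨h1, h2⟩; exact ⟨⟨lt_of_lt_of_le ha0 h1, h2⟩, h1⟩
      have hval : ∫ s in Set.Ioo 0 Λ ∩ Set.Ici a, s⁻¹ = Real.log (Λ^2/‖z‖) := by
        rw [hr] at *
        rw [hset]
        have h1 : ∫ s in Set.Ico a Λ, (s)⁻¹ = ∫ s in Set.Ioo a Λ, (s)⁻¹ := by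
          rw [integral_Ico_eq_integral_Ioo]
        have h2 : ∫ s in Set.Ioo a Λ, (s)⁻¹ = ∫ s in a..Λ, s⁻¹ := by
          rw [intervalIntegral.integral_of_le haΛ.le, integral_Ioc_eq_integral_Ioo]
        rw [h1, h2, integral_inv_of_pos ha0 hΛ]
        congr 1
        rw [ha]
        field_simp
      rw [hr, hval, Set.indicator_of_mem (mem_closedBall_zero_iff.mpr hcase.le),
        Complex.real_smul]
    · have haΛ : Λ ≤ a := by
        rw [ha, le_div_iff₀ hΛ]
        nlinarith
      have hset : Set.Ioo 0 Λ ∩ Set.Ici a = ∅ := by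
        ext s
        simp only [Set.mem_inter_iff, Set.mem_Ioo, Set.mem_Ici, Set.mem_empty_iff_false,
          iff_false, not_and]
        rintro ⟨_, h2⟩ h3
        exact absurd (lt_of_le_of_lt (le_trans haΛ h3) h2) (lt_irrefl Λ)
      rw [hr, hset]
      simp only [Measure.restrict_empty, integral_zero_measure, zero_smul]
      by_cases hmem : ‖z‖ ≤ Λ^2
      · have heq : ‖z‖ = Λ^2 := le_antisymm hmem (not_lt.mp hcase)
        rw [Set.indicator_of_mem (mem_closedBall_zero_iff.mpr hmem), heq,
          div_self (by positivity), Real.log_one]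
        simp
      · rw [Set.indicator_of_notMem (fun hh => hmem (mem_closedBall_zero_iff.mp hh))]
  have hae : ∀ᵐ z ∂quatVolume, (∫ s, k s z ∂ν)
      = Set.indicator (closedBall (0:ℍ[ℝ]) (Λ^2))
          (fun z => (Real.log (Λ^2/‖z‖) : ℂ) * F z) z := by
    have h0 : ∀ᵐ z ∂quatVolume, z ≠ 0 := by
      haveI : NullSingletonClass quatVolume := inferInstance
      have hset0 : {z : ℍ[ℝ] | ¬ z ≠ 0} = {0} := by ext w; simp
      rw [ae_iff, hset0]
      exact measure_singleton 0
    filter_upwards [h0] with z hz using hinner z hz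
  rw [hL, hswap, integral_congr_ae hae, integral_indicator measurableSet_closedBall]

/-- For a continuous, bounded, integrable `F : ℍ → ℂ` and `Λ > 0`,
`∫_{‖x‖≤Λ} ∫_{‖y‖≤Λ} F(x·y) dx dy = 2π² ∫_{‖z‖≤Λ²} log(Λ²/‖z‖) F(z) dz`. -/
theorem double_integral_cutoff_eq (F : ℍ[ℝ] → ℂ) (hFc : Continuous F)
    (hFb : ∃ C : ℝ, ∀ z, ‖F z‖ ≤ C) (hFi : Integrable F quatVolume)
    (Λ : ℝ) (hΛ : 0 < Λ) :
    ∫ x in {x : ℍ[ℝ] | ‖x‖ ≤ Λ}, ∫ y in {y : ℍ[ℝ] | ‖y‖ ≤ Λ},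
        F (x * y) ∂quatVolume ∂quatVolume
      = (2 * Real.pi ^ 2 : ℂ) *
        ∫ z in {z : ℍ[ℝ] | ‖z‖ ≤ Λ ^ 2}, (Real.log (Λ ^ 2 / ‖z‖) : ℂ) * F z ∂quatVolume := by
  obtain ⟨C, hC⟩ := hFb
  have hsetΛ : {x : ℍ[ℝ] | ‖x‖ ≤ Λ} = closedBall (0:ℍ[ℝ]) Λ := by
    ext x; rw [Set.mem_setOf_eq, mem_closedBall_zero_iff]
  have hsetΛ2 : {z : ℍ[ℝ] | ‖z‖ ≤ Λ^2} = closedBall (0:ℍ[ℝ]) (Λ^2) := by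
    ext z; rw [Set.mem_setOf_eq, mem_closedBall_zero_iff]
  rw [hsetΛ, hsetΛ2]
  have h0 : ∀ᵐ x ∂quatVolume, x ≠ 0 := by
    haveI : NullSingletonClass quatVolume := inferInstance
    have hset0 : {x : ℍ[ℝ] | ¬ x ≠ 0} = {0} := by ext w; simp
    rw [ae_iff, hset0]
    exact measure_singleton 0
  have step1 : ∫ x in closedBall (0:ℍ[ℝ]) Λ, (∫ y in closedBall (0:ℍ[ℝ]) Λ,
        F (x * y) ∂quatVolume) ∂quatVolume
      = ∫ x in closedBall (0:ℍ[ℝ]) Λ, ((‖x‖^4)⁻¹ : ℝ) •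
          (∫ z in closedBall (0:ℍ[ℝ]) (Λ * ‖x‖), F z ∂quatVolume) ∂quatVolume := by
    refine setIntegral_congr_ae measurableSet_closedBall ?_
    filter_upwards [h0] with x hx _
    exact inner_cov F hFc x hx Λ
  rw [step1,
    polar_out Λ (fun s => ∫ z in closedBall (0:ℍ[ℝ]) (Λ * s), F z ∂quatVolume),
    fubini_step F hFc hC hFi Λ hΛ, Complex.real_smul]
  push_cast
  ring
end
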